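/- Let a = i(x²−y²), b = −y(y²/3−x²−1) − i(x(1+y²−x²/3)+C−t), U = i(a(|z|²−1) + b̄z̄ − bz)/(|a|²+|b|²), and ψ = (1/(|a|²+|b|²))·(āz − b̄, ā + b̄z̄)ᵀ with z = x+iy. Then at every point where |a|²+|b|² ≠ 0, the vector ψ satisfies the Dirac equation ∂ψ₂ + Uψ₁ = 0 and −∂̄ψ₁ + Uψ₂ = 0 (i.e. Lψ = 0 for L = [[0,∂],[−∂̄,0]] + diag(U,U)). -/

import Mathlib

open Complex

noncomputable def pd1 (f : ℝ → ℝ → ℂ) : ℝ → ℝ → ℂ := fun x y => deriv (fun x' => f x' y) x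
noncomputable def pd2 (f : ℝ → ℝ → ℂ) : ℝ → ℝ → ℂ := fun x y => deriv (fun y' => f x y') y
noncomputable def del (f : ℝ → ℝ → ℂ) : ℝ → ℝ → ℂ :=
  fun x y => (pd1 f x y - Complex.I * pd2 f x y) / 2
noncomputable def delbar (f : ℝ → ℝ → ℂ) : ℝ → ℝ → ℂ :=
  fun x y => (pd1 f x y + Complex.I * pd2 f x y) / 2

/-- z = x + iy -/
noncomputable def zc (x y : ℝ) : ℂ := (x : ℂ) + Complex.I * (y : ℂ)

/-- a = i(x²−y²) -/
noncomputable def aMNV (x y : ℝ) : ℂ := Complex.I * ((x^2 - y^2 : ℝ) : ℂ)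

/-- b = −y(y²/3 − x² − 1) − i(x(1 + y² − x²/3) + C − t) -/
noncomputable def bMNV (C t x y : ℝ) : ℂ :=
  ((-y*(y^2/3 - x^2 - 1) : ℝ) : ℂ) - Complex.I * ((x*(1 + y^2 - x^2/3) + C - t : ℝ) : ℂ)

/-- |a|² + |b|² -/
noncomputable def denomMNV (C t x y : ℝ) : ℝ :=
  (‖aMNV x y‖)^2 + (‖bMNV C t x y‖)^2

/-- U = i(a(|z|²−1) + b̄z̄ − bz)/(|a|²+|b|²) -/
noncomputable def UMNV (C t : ℝ) : ℝ → ℝ → ℂ := fun x y =>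
  Complex.I * (aMNV x y * ((x^2 + y^2 - 1 : ℝ) : ℂ)
      + (starRingEnd ℂ) (bMNV C t x y) * (starRingEnd ℂ) (zc x y)
      - bMNV C t x y * zc x y) / ((denomMNV C t x y : ℝ) : ℂ)

/-- ψ₁ = (āz − b̄)/(|a|²+|b|²) -/
noncomputable def psi1MNV (C t : ℝ) : ℝ → ℝ → ℂ := fun x y =>
  ((starRingEnd ℂ) (aMNV x y) * zc x y - (starRingEnd ℂ) (bMNV C t x y))
    / ((denomMNV C t x y : ℝ) : ℂ)

/-- ψ₂ = (ā + b̄z̄)/(|a|²+|b|²) -/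
noncomputable def psi2MNV (C t : ℝ) : ℝ → ℝ → ℂ := fun x y =>
  ((starRingEnd ℂ) (aMNV x y) + (starRingEnd ℂ) (bMNV C t x y) * (starRingEnd ℂ) (zc x y))
    / ((denomMNV C t x y : ℝ) : ℂ)


noncomputable def cA (x y : ℝ) : ℂ := Complex.I * ((x:ℂ)^2 - (y:ℂ)^2)
noncomputable def cAb (x y : ℝ) : ℂ := -Complex.I * ((x:ℂ)^2 - (y:ℂ)^2)
noncomputable def cB (C t x y : ℝ) : ℂ :=
  -(y:ℂ)*((y:ℂ)^2/3 - (x:ℂ)^2 - 1) - Complex.I*((x:ℂ)*(1+(y:ℂ)^2-(x:ℂ)^2/3)+(C:ℂ)-(t:ℂ))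
noncomputable def cBb (C t x y : ℝ) : ℂ :=
  -(y:ℂ)*((y:ℂ)^2/3 - (x:ℂ)^2 - 1) + Complex.I*((x:ℂ)*(1+(y:ℂ)^2-(x:ℂ)^2/3)+(C:ℂ)-(t:ℂ))

lemma hcongr {f : ℝ → ℂ} {x : ℝ} {v w : ℂ} (h : HasDerivAt f v x) (e : v = w) :
    HasDerivAt f w x := e ▸ h

lemma hOfReal (x : ℝ) : HasDerivAt (fun s : ℝ => (s:ℂ)) 1 x :=
  hcongr ((hasDerivAt_id x).ofReal_comp) (by norm_num)

lemma hSq (x : ℝ) : HasDerivAt (fun s : ℝ => ((s:ℂ))^2) (2*(x:ℂ)) x := by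
  have h : HasDerivAt (fun s : ℝ => (s:ℂ)^2) (1*(x:ℂ)+(x:ℂ)*1) x := by
    simp only [pow_two]; exact (hOfReal x).mul (hOfReal x)
  exact hcongr h (by ring)

lemma hA_x (x y : ℝ) : HasDerivAt (fun s : ℝ => cA s y) (2*Complex.I*(x:ℂ)) x :=
  hcongr (((hSq x).sub_const ((y:ℂ)^2)).const_mul Complex.I) (by ring)

lemma hAb_x (x y : ℝ) : HasDerivAt (fun s : ℝ => cAb s y) (-(2*Complex.I*(x:ℂ))) x :=
  hcongr (((hSq x).sub_const ((y:ℂ)^2)).const_mul (-Complex.I)) (by ring)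

lemma hA_y (x y : ℝ) : HasDerivAt (fun s : ℝ => cA x s) (-(2*Complex.I*(y:ℂ))) y :=
  hcongr (((hSq y).const_sub ((x:ℂ)^2)).const_mul Complex.I) (by ring)

lemma hAb_y (x y : ℝ) : HasDerivAt (fun s : ℝ => cAb x s) (2*Complex.I*(y:ℂ)) y :=
  hcongr (((hSq y).const_sub ((x:ℂ)^2)).const_mul (-Complex.I)) (by ring)

lemma hB_x (C t x y : ℝ) :
    HasDerivAt (fun s : ℝ => cB C t s y) (2*(x:ℂ)*(y:ℂ) - Complex.I*(1+(y:ℂ)^2-(x:ℂ)^2)) x := by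
  have h1 := (((hSq x).const_sub ((y:ℂ)^2/3)).sub_const 1).const_mul (-(y:ℂ))
  have h2 := ((((hOfReal x).mul (((hSq x).div_const 3).const_sub (1+(y:ℂ)^2))).add_const ((C:ℂ))).sub_const ((t:ℂ))).const_mul Complex.I
  exact hcongr (h1.sub h2) (by ring)

lemma hBb_x (C t x y : ℝ) :
    HasDerivAt (fun s : ℝ => cBb C t s y) (2*(x:ℂ)*(y:ℂ) + Complex.I*(1+(y:ℂ)^2-(x:ℂ)^2)) x := by
  have h1 := (((hSq x).const_sub ((y:ℂ)^2/3)).sub_const 1).const_mul (-(y:ℂ))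
  have h2 := ((((hOfReal x).mul (((hSq x).div_const 3).const_sub (1+(y:ℂ)^2))).add_const ((C:ℂ))).sub_const ((t:ℂ))).const_mul Complex.I
  exact hcongr (h1.add h2) (by ring)

lemma hB_y (C t x y : ℝ) :
    HasDerivAt (fun s : ℝ => cB C t x s) (-((y:ℂ)^2-(x:ℂ)^2-1) - 2*Complex.I*(x:ℂ)*(y:ℂ)) y := by
  have h1 := (hOfReal y).neg.mul ((((hSq y).div_const 3).sub_const ((x:ℂ)^2)).sub_const 1)
  have h2 := (((((hSq y).const_add 1).sub_const ((x:ℂ)^2/3)).const_mul ((x:ℂ))).add_const ((C:ℂ))).sub_const ((t:ℂ))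
  exact hcongr (h1.sub (h2.const_mul Complex.I)) (by simp only [Pi.neg_apply]; ring)

lemma hBb_y (C t x y : ℝ) :
    HasDerivAt (fun s : ℝ => cBb C t x s) (-((y:ℂ)^2-(x:ℂ)^2-1) + 2*Complex.I*(x:ℂ)*(y:ℂ)) y := by
  have h1 := (hOfReal y).neg.mul ((((hSq y).div_const 3).sub_const ((x:ℂ)^2)).sub_const 1)
  have h2 := (((((hSq y).const_add 1).sub_const ((x:ℂ)^2/3)).const_mul ((x:ℂ))).add_const ((C:ℂ))).sub_const ((t:ℂ))
  exact hcongr (h1.add (h2.const_mul Complex.I)) (by simp only [Pi.neg_apply]; ring)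


-- ### auxiliary pointwise equalities ###
lemma a_eq (x y : ℝ) : aMNV x y = cA x y := by
  simp only [aMNV, cA]; push_cast; ring
lemma ab_eq (x y : ℝ) : (starRingEnd ℂ) (aMNV x y) = cAb x y := by
  simp only [aMNV, cAb, map_mul, Complex.conj_I, Complex.conj_ofReal]; push_cast; ring
lemma b_eq (C t x y : ℝ) : bMNV C t x y = cB C t x y := by
  simp only [bMNV, cB]; push_cast; ring
lemma bb_eq (C t x y : ℝ) : (starRingEnd ℂ) (bMNV C t x y) = cBb C t x y := by
  simp only [bMNV, cBb, map_sub, map_mul, map_ofNat, Complex.conj_I, Complex.conj_ofReal]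
  push_cast; ring
lemma zb_eq (x y : ℝ) : (starRingEnd ℂ) (zc x y) = (x:ℂ) - Complex.I * (y:ℂ) := by
  simp only [zc, map_add, map_mul, Complex.conj_I, Complex.conj_ofReal]; ring
lemma denom_eq (C t x y : ℝ) :
    ((denomMNV C t x y : ℝ) : ℂ) = cA x y * cAb x y + cB C t x y * cBb C t x y := by
  rw [← a_eq, ← ab_eq, ← b_eq, ← bb_eq, Complex.mul_conj, Complex.mul_conj]
  push_cast [denomMNV, Complex.sq_norm]; ring

lemma psi2_eq (C t x y : ℝ) : psi2MNV C t x y =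
    (cAb x y + cBb C t x y * ((x:ℂ) - Complex.I*(y:ℂ)))
      / (cA x y * cAb x y + cB C t x y * cBb C t x y) := by
  simp only [psi2MNV]; rw [ab_eq, bb_eq, zb_eq, denom_eq]

lemma psi1_eq (C t x y : ℝ) : psi1MNV C t x y =
    (cAb x y * ((x:ℂ) + Complex.I*(y:ℂ)) - cBb C t x y)
      / (cA x y * cAb x y + cB C t x y * cBb C t x y) := by
  simp only [psi1MNV, zc]; rw [ab_eq, bb_eq, denom_eq]

lemma U_eq (C t x y : ℝ) : UMNV C t x y =
    Complex.I * (cA x y * ((x:ℂ)^2+(y:ℂ)^2-1)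
      + cBb C t x y * ((x:ℂ) - Complex.I*(y:ℂ))
      - cB C t x y * ((x:ℂ) + Complex.I*(y:ℂ)))
      / (cA x y * cAb x y + cB C t x y * cBb C t x y) := by
  simp only [UMNV]; rw [bb_eq, zb_eq, a_eq, b_eq, denom_eq]; simp only [zc]; push_cast; ring


lemma combine1 {D A B U0 N1 : ℂ} (hD : D ≠ 0)
    (hnum : A - Complex.I*B + 2*(U0*N1) = 0) :
    (A/D^2 - Complex.I*(B/D^2))/2 + U0/D*(N1/D) = 0 := by
  have e : (A/D^2 - Complex.I*(B/D^2))/2 + U0/D*(N1/D)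
      = (A - Complex.I*B + 2*(U0*N1))/(2*D^2) := by
    field_simp
  rw [e, hnum, zero_div]

lemma combine2 {D A B U0 N2 : ℂ} (hD : D ≠ 0)
    (hnum : -(A + Complex.I*B) + 2*(U0*N2) = 0) :
    -((A/D^2 + Complex.I*(B/D^2))/2) + U0/D*(N2/D) = 0 := by
  have e : -((A/D^2 + Complex.I*(B/D^2))/2) + U0/D*(N2/D)
      = (-(A + Complex.I*B) + 2*(U0*N2))/(2*D^2) := by
    field_simp
  rw [e, hnum, zero_div]


lemma I2' : Complex.I^2 = -1 := Complex.I_sq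
lemma I3' : Complex.I^3 = -Complex.I := by rw [pow_succ, I2']; ring
lemma I4' : Complex.I^4 = 1 := by rw [pow_succ, I3']; simp [Complex.I_mul_I]
lemma I5' : Complex.I^5 = Complex.I := by rw [pow_succ, I4']; ring
lemma I6' : Complex.I^6 = -1 := by rw [pow_succ, I5', Complex.I_mul_I]
lemma I7' : Complex.I^7 = -Complex.I := by rw [pow_succ, I6']; ring
lemma I8' : Complex.I^8 = 1 := by rw [pow_succ, I7']; simp [Complex.I_mul_I]
lemma I9' : Complex.I^9 = Complex.I := by rw [pow_succ, I8']; ring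
lemma I10' : Complex.I^10 = -1 := by rw [pow_succ, I9', Complex.I_mul_I]
lemma I11' : Complex.I^11 = -Complex.I := by rw [pow_succ, I10']; ring
lemma I12' : Complex.I^12 = 1 := by rw [pow_succ, I11']; simp [Complex.I_mul_I]
set_option maxHeartbeats 4000000 in
set_option maxRecDepth 100000 in
theorem mnv_dirac_zero_level (C t x y : ℝ) (h : denomMNV C t x y ≠ 0) :
    del (psi2MNV C t) x y + UMNV C t x y * psi1MNV C t x y = 0 ∧
    -(delbar (psi1MNV C t) x y) + UMNV C t x y * psi2MNV C t x y = 0 := by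
  have hD0 : cA x y * cAb x y + cB C t x y * cBb C t x y ≠ 0 := by
    rw [← denom_eq]; exact_mod_cast h
  have hZx := (hOfReal x).add_const (Complex.I*(y:ℂ))
  have hZbx := (hOfReal x).sub_const (Complex.I*(y:ℂ))
  have hZy := ((hOfReal y).const_mul Complex.I).const_add ((x:ℂ))
  have hZby := ((hOfReal y).const_mul Complex.I).const_sub ((x:ℂ))
  have hDx := ((hA_x x y).mul (hAb_x x y)).add ((hB_x C t x y).mul (hBb_x C t x y))
  have hDy := ((hA_y x y).mul (hAb_y x y)).add ((hB_y C t x y).mul (hBb_y C t x y))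
  have hpsi2x := ((hAb_x x y).add ((hBb_x C t x y).mul hZbx)).div hDx hD0
  have hpsi2y := ((hAb_y x y).add ((hBb_y C t x y).mul hZby)).div hDy hD0
  have hpsi1x := (((hAb_x x y).mul hZx).sub (hBb_x C t x y)).div hDx hD0
  have hpsi1y := (((hAb_y x y).mul hZy).sub (hBb_y C t x y)).div hDy hD0
  simp only [Pi.add_def, Pi.mul_def, Pi.sub_def, Pi.div_def] at hpsi2x hpsi2y hpsi1x hpsi1y
  have f2x : (fun x' : ℝ => psi2MNV C t x' y) = (fun x' : ℝ =>
      (cAb x' y + cBb C t x' y * ((x':ℂ) - Complex.I*(y:ℂ)))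
        / (cA x' y * cAb x' y + cB C t x' y * cBb C t x' y)) :=
    funext fun s => psi2_eq C t s y
  have f2y : (fun y' : ℝ => psi2MNV C t x y') = (fun y' : ℝ =>
      (cAb x y' + cBb C t x y' * ((x:ℂ) - Complex.I*(y':ℂ)))
        / (cA x y' * cAb x y' + cB C t x y' * cBb C t x y')) :=
    funext fun s => psi2_eq C t x s
  have f1x : (fun x' : ℝ => psi1MNV C t x' y) = (fun x' : ℝ =>
      (cAb x' y * ((x':ℂ) + Complex.I*(y:ℂ)) - cBb C t x' y)
        / (cA x' y * cAb x' y + cB C t x' y * cBb C t x' y)) :=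
    funext fun s => psi1_eq C t s y
  have f1y : (fun y' : ℝ => psi1MNV C t x y') = (fun y' : ℝ =>
      (cAb x y' * ((x:ℂ) + Complex.I*(y':ℂ)) - cBb C t x y')
        / (cA x y' * cAb x y' + cB C t x y' * cBb C t x y')) :=
    funext fun s => psi1_eq C t x s
  simp only [del, delbar, pd1, pd2]
  rw [f2x, f2y, f1x, f1y, psi1_eq, psi2_eq, U_eq,
    hpsi2x.deriv, hpsi2y.deriv, hpsi1x.deriv, hpsi1y.deriv]
  refine ⟨?_, ?_⟩
  · apply combine1 hD0
    simp only [cA, cAb, cB, cBb]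
    ring_nf
    simp only [I2', I3', I4', I5', I6', I7', I8', I9', I10', I11', I12']
    ring
  · apply combine2 hD0
    simp only [cA, cAb, cB, cBb]
    ring_nf
    simp only [I2', I3', I4', I5', I6', I7', I8', I9', I10', I11', I12']
    ring
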